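/- For forests f₁, f₂ over Σ: nf_𝓒(nf_𝓐(f₁)) = nf_𝓒(nf_𝓐(f₂)) if and only if f₁ and f₂ are equal modulo the associativity identities for symbols in 𝓐 and the commutativity identities for symbols in 𝓒. -/

import Mathlib

inductive RTree (σ : Type) : Type
  | node : σ → List (RTree σ) → RTree σ

/-- The alphabet `Σ ∪ {(, )}`: `⊥` is `'('`, `(⊥ : WithBot σ)` is `')'` and
`letter a` is the letter `a ∈ Σ`.  If `σ` is linearly ordered, this alphabet
carries the induced linear order. -/
abbrev TSym (σ : Type) : Type := WithBot (WithBot σ)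

def lparen {σ : Type} : TSym σ := ⊥
def rparen {σ : Type} : TSym σ := ((⊥ : WithBot σ) : TSym σ)
def letter {σ : Type} (a : σ) : TSym σ := ((a : WithBot σ) : TSym σ)

mutual
/-- The term representation of a tree as a string over `Σ ∪ {(, )}`:
`rep(a(f)) = a ( rep(f) )`. -/
def repT {σ : Type} : RTree σ → List (TSym σ)
  | .node a l => letter a :: lparen :: (repF l ++ [rparen])
/-- The term representation of a forest: `rep(t₁ ⋯ tₙ) = rep(t₁) ⋯ rep(tₙ)`. -/
def repF {σ : Type} : List (RTree σ) → List (TSym σ)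
  | [] => []
  | t :: ts => repT t ++ repF ts
end

/-- The length-lexicographic order on strings induced by an order `r`. -/
def llex {α : Type} (r : α → α → Prop) (x y : List α) : Prop :=
  x.length < y.length ∨ (x.length = y.length ∧ List.Lex r x y)

instance {α : Type} [DecidableEq α] (r : α → α → Prop) [DecidableRel r] :
    DecidableRel (llex r) := fun _ _ => by unfold llex; infer_instance

/-- The Boolean comparison used for sorting sibling trees: `s ≤ t` iff
`rep(t)` is not length-lexicographically smaller than `rep(s)`. -/
def leTree {σ : Type} [LinearOrder σ] (s t : RTree σ) : Bool :=
  decide (¬ llex (· < ·) (repT t) (repT s))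

/-- Sort a list of sibling trees by the length-lexicographic order of their
term representations. -/
def sortTrees {σ : Type} [LinearOrder σ] (l : List (RTree σ)) : List (RTree σ) :=
  l.mergeSort leTree

mutual
/-- The commutative normal form: below a `𝓒`-labelled node, the children are
sorted with respect to `<llex` of their term representations. -/
def nfCT {σ : Type} [LinearOrder σ] (C : Set σ) [DecidablePred (· ∈ C)] :
    RTree σ → RTree σ
  | .node a l => .node a (if a ∈ C then sortTrees (nfCF C l) else nfCF C l)
/-- The commutative normal form of a forest. -/
def nfCF {σ : Type} [LinearOrder σ] (C : Set σ) [DecidablePred (· ∈ C)] :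
    List (RTree σ) → List (RTree σ)
  | [] => []
  | t :: ts => nfCT C t :: nfCF C ts
end
mutual
/-- `φ_a` on trees, where `a : Option σ` ranges over `Σ ∪ {•}` (`none` is `•`):
`φ_a(b(f)) = φ_a(f)` if `a = b ∈ 𝓐`, and `φ_a(b(f)) = b(φ_b(f))` otherwise. -/
def phiT {σ : Type} [DecidableEq σ] (A : Set σ) [DecidablePred (· ∈ A)] :
    Option σ → RTree σ → List (RTree σ)
  | a, .node b f =>
      if a = some b ∧ b ∈ A then phiF A a f else [.node b (phiF A (some b) f)]
/-- `φ_a` extended homomorphically to forests. -/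
def phiF {σ : Type} [DecidableEq σ] (A : Set σ) [DecidablePred (· ∈ A)] :
    Option σ → List (RTree σ) → List (RTree σ)
  | _, [] => []
  | a, t :: ts => phiT A a t ++ phiF A a ts
end

/-- The associative normal form `nf_𝓐(f) = φ_•(f)`. -/
def nfA {σ : Type} [DecidableEq σ] (A : Set σ) [DecidablePred (· ∈ A)]
    (f : List (RTree σ)) : List (RTree σ) :=
  phiF A none f

/-- Equality of forests modulo associativity (for `a ∈ 𝓐`) and commutativity
(for `c ∈ 𝓒`): the smallest congruence containing all instances of
`a(t₁ ⋯ tₙ) = a(t₁ ⋯ tᵢ₋₁ a(tᵢ ⋯ tⱼ₋₁) tⱼ ⋯ tₙ)` and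
`c(t₁ ⋯ tₙ) = c(t_{σ(1)} ⋯ t_{σ(n)})`. -/
inductive EqAC {σ : Type} (A C : Set σ) : List (RTree σ) → List (RTree σ) → Prop
  | assoc {a : σ} {f g h : List (RTree σ)} :
      a ∈ A → EqAC A C [.node a (f ++ g ++ h)] [.node a (f ++ .node a g :: h)]
  | comm {c : σ} {l l' : List (RTree σ)} :
      c ∈ C → l.Perm l' → EqAC A C [.node c l] [.node c l']
  | refl (f : List (RTree σ)) : EqAC A C f f
  | symm {f g : List (RTree σ)} : EqAC A C f g → EqAC A C g f
  | trans {f g h : List (RTree σ)} : EqAC A C f g → EqAC A C g h → EqAC A C f h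
  | congrNode {a : σ} {f g : List (RTree σ)} :
      EqAC A C f g → EqAC A C [.node a f] [.node a g]
  | congrConcat {f f' g g' : List (RTree σ)} :
      EqAC A C f f' → EqAC A C g g' → EqAC A C (f ++ g) (f' ++ g')

-- basic symbol lemmas
lemma letter_inj {σ : Type} {a b : σ} (h : letter a = letter b) : a = b := by
  simpa [letter] using h

lemma letter_ne_rparen {σ : Type} (a : σ) : letter a ≠ rparen := by
  simp [letter, rparen]

lemma letter_ne_lparen {σ : Type} (a : σ) : letter a ≠ lparen := by
  simp [letter, lparen]

lemma rep_cancel {σ : Type} : ∀ (n : ℕ) (l l' : List (RTree σ)) (u u' : List (TSym σ)),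
    (repF l ++ u).length ≤ n →
    repF l ++ u = repF l' ++ u' →
    (∀ a : σ, u.head? ≠ some (letter a)) →
    (∀ a : σ, u'.head? ≠ some (letter a)) →
    l = l' ∧ u = u' := by
  intro n
  induction n with
  | zero =>
    intro l l' u u' hlen heq hu hu'
    match l, l' with
    | [], [] => simpa [repF] using heq
    | [], (.node a g) :: ts =>
      simp [repF, repT] at heq
      exact absurd (by rw [heq]; simp) (hu a)
    | (.node a g) :: ts, _ =>
      simp [repF, repT] at hlen
  | succ n ih =>
    intro l l' u u' hlen heq hu hu'
    match l, l' with
    | [], [] => simpa [repF] using heq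
    | [], (.node a g) :: ts =>
      simp only [repF, repT, List.nil_append, List.cons_append] at heq
      exact absurd (by rw [heq]; simp) (hu a)
    | (.node a g) :: ts, [] =>
      simp only [repF, repT, List.nil_append, List.cons_append] at heq
      exact absurd (by rw [← heq]; simp) (hu' a)
    | (.node a g) :: ts, (.node a' g') :: ts' =>
      simp only [repF, repT, List.cons_append, List.append_assoc, List.cons.injEq] at heq
      obtain ⟨ha, -, heq⟩ := heq
      obtain rfl : a = a' := letter_inj ha
      simp only [List.nil_append] at heq
      have hlen1 : (repF g ++ (rparen :: (repF ts ++ u))).length ≤ n := by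
        simp only [repF, repT, List.cons_append, List.append_assoc, List.length_cons,
          List.length_append] at hlen ⊢
        omega
      have h1 := ih g g' (rparen :: (repF ts ++ u)) (rparen :: (repF ts' ++ u')) hlen1 heq
        (by intro b; simp; exact fun hb => letter_ne_rparen b hb.symm)
        (by intro b; simp; exact fun hb => letter_ne_rparen b hb.symm)
      obtain ⟨rfl, h2⟩ := h1
      have h3 : repF ts ++ u = repF ts' ++ u' := by simpa using h2
      have hlen2 : (repF ts ++ u).length ≤ n := by
        have := hlen1
        simp only [List.length_append, List.length_cons] at this ⊢
        omega
      obtain ⟨rfl, rfl⟩ := ih ts ts' u u' hlen2 h3 hu hu'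
      exact ⟨rfl, rfl⟩

lemma repT_inj {σ : Type} {s t : RTree σ} (h : repT s = repT t) : s = t := by
  have := rep_cancel (repF [s] ++ []).length [s] [t] [] [] le_rfl
    (by simp [repF, h]) (by simp) (by simp)
  simpa using this.1

lemma llex_trichotomy {α : Type} [LinearOrder α] (x y : List α) :
    llex (· < ·) x y ∨ x = y ∨ llex (· < ·) y x := by
  rcases Nat.lt_trichotomy x.length y.length with h | h | h
  · exact Or.inl (Or.inl h)
  · rcases trichotomous_of (List.Lex ((· < ·) : α → α → Prop)) x y with hl | he | hl
    · exact Or.inl (Or.inr ⟨h, hl⟩)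
    · exact Or.inr (Or.inl he)
    · exact Or.inr (Or.inr (Or.inr ⟨h.symm, hl⟩))
  · exact Or.inr (Or.inr (Or.inl h))

lemma llex_asymm {α : Type} [LinearOrder α] {x y : List α}
    (h1 : llex (· < ·) x y) (h2 : llex (· < ·) y x) : False := by
  rcases h1 with h1 | ⟨he1, hl1⟩ <;> rcases h2 with h2 | ⟨he2, hl2⟩
  · omega
  · omega
  · omega
  · exact asymm_of (List.Lex ((· < ·) : α → α → Prop)) hl1 hl2

lemma llex_eq_of_not {α : Type} [LinearOrder α] {x y : List α}
    (h1 : ¬ llex (· < ·) x y) (h2 : ¬ llex (· < ·) y x) : x = y := by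
  rcases llex_trichotomy x y with h | h | h
  · exact absurd h h1
  · exact h
  · exact absurd h h2

lemma llex_not_iff {α : Type} [LinearOrder α] {x y : List α} :
    ¬ llex (· < ·) x y ↔ (x = y ∨ llex (· < ·) y x) := by
  constructor
  · intro h
    rcases llex_trichotomy x y with h' | h' | h'
    · exact absurd h' h
    · exact Or.inl h'
    · exact Or.inr h'
  · rintro (rfl | h)
    · intro h'; exact llex_asymm h' h'
    · intro h'; exact llex_asymm h' h

lemma llex_trans {α : Type} [LinearOrder α] {x y z : List α}
    (h1 : llex (· < ·) x y) (h2 : llex (· < ·) y z) : llex (· < ·) x z := by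
  rcases h1 with h1 | ⟨he1, hl1⟩ <;> rcases h2 with h2 | ⟨he2, hl2⟩
  · exact Or.inl (h1.trans h2)
  · exact Or.inl (he2 ▸ h1)
  · exact Or.inl (he1 ▸ h2)
  · exact Or.inr ⟨he1.trans he2, List.lex_trans lt_trans hl1 hl2⟩

section Order
variable {σ : Type} [LinearOrder σ]

lemma leTree_iff {s t : RTree σ} :
    leTree s t = true ↔ ¬ llex (· < ·) (repT t) (repT s) := by
  simp [leTree]

lemma leTree_trans (a b c : RTree σ) (h1 : leTree a b = true) (h2 : leTree b c = true) :
    leTree a c = true := by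
  rw [leTree_iff] at h1 h2 ⊢
  rcases llex_not_iff.mp h1 with he1 | hl1 <;> rcases llex_not_iff.mp h2 with he2 | hl2
  · exact llex_not_iff.mpr (Or.inl (he2.trans he1))
  · exact llex_not_iff.mpr (Or.inr (he1 ▸ hl2))
  · exact llex_not_iff.mpr (Or.inr (he2 ▸ hl1))
  · exact llex_not_iff.mpr (Or.inr (llex_trans hl1 hl2))

lemma leTree_total (a b : RTree σ) : (leTree a b || leTree b a) = true := by
  rw [Bool.or_eq_true, leTree_iff, leTree_iff]
  by_contra h
  push_neg at h
  exact llex_asymm h.1 h.2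

lemma leTree_antisymm {s t : RTree σ} (h1 : leTree s t = true) (h2 : leTree t s = true) :
    s = t := by
  rw [leTree_iff] at h1 h2
  exact (repT_inj (llex_eq_of_not h1 h2)).symm

lemma sortTrees_congr {X Y : List (RTree σ)} (h : X.Perm Y) : sortTrees X = sortTrees Y := by
  have : IsAntisymm (RTree σ) (fun s t => leTree s t = true) := ⟨fun _ _ => leTree_antisymm⟩
  exact List.Perm.eq_of_pairwise (le := fun s t => leTree s t = true)
    (fun _ _ _ _ h1 h2 => leTree_antisymm h1 h2)
    (List.pairwise_mergeSort leTree_trans leTree_total X)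
    (List.pairwise_mergeSort leTree_trans leTree_total Y)
    (((X.mergeSort_perm leTree).trans h).trans (Y.mergeSort_perm leTree).symm)

lemma sortTrees_perm (X : List (RTree σ)) : (sortTrees X).Perm X :=
  X.mergeSort_perm leTree

end Order

section Main
set_option linter.unusedSectionVars false
variable {σ : Type} [LinearOrder σ] (A C : Set σ)
  [DecidablePred (· ∈ A)] [DecidablePred (· ∈ C)]

-- size of a forest
mutual
def szT {σ : Type} : RTree σ → Nat
  | .node _ l => 1 + szF l
def szF {σ : Type} : List (RTree σ) → Nat
  | [] => 0
  | t :: ts => szT t + szF ts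
end

lemma szF_append (l₁ l₂ : List (RTree σ)) : szF (l₁ ++ l₂) = szF l₁ + szF l₂ := by
  induction l₁ with
  | nil => simp [szF]
  | cons t ts ih => simp [szF, ih]; omega

lemma phiF_append (a : Option σ) (l₁ l₂ : List (RTree σ)) :
    phiF A a (l₁ ++ l₂) = phiF A a l₁ ++ phiF A a l₂ := by
  induction l₁ with
  | nil => simp [phiF]
  | cons t ts ih => simp [phiF, ih]

lemma nfCF_append (l₁ l₂ : List (RTree σ)) :
    nfCF C (l₁ ++ l₂) = nfCF C l₁ ++ nfCF C l₂ := by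
  induction l₁ with
  | nil => simp [nfCF]
  | cons t ts ih => simp [nfCF, ih]

lemma nfCF_eq_map (l : List (RTree σ)) : nfCF C l = l.map (nfCT C) := by
  induction l with
  | nil => simp [nfCF]
  | cons t ts ih => simp [nfCF, ih]

lemma phiT_none (b : σ) (g : List (RTree σ)) :
    phiT A none (.node b g) = [.node b (phiF A (some b) g)] := by
  simp [phiT]

lemma phiF_perm (a : Option σ) {l l' : List (RTree σ)} (h : l.Perm l') :
    (phiF A a l).Perm (phiF A a l') := by
  induction h with
  | nil => exact List.Perm.refl _
  | cons x _ ih => exact (List.Perm.refl (phiT A a x)).append ih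
  | swap x y l =>
      show (phiT A a y ++ (phiT A a x ++ phiF A a l)).Perm
        (phiT A a x ++ (phiT A a y ++ phiF A a l))
      rw [← List.append_assoc, ← List.append_assoc]
      exact List.perm_append_comm.append (List.Perm.refl _)
  | trans _ _ ih1 ih2 => exact ih1.trans ih2

-- squash
def squash (a : σ) : List (RTree σ) → List (RTree σ)
  | [] => []
  | .node c h :: ts => (if c = a ∧ a ∈ A then h else [.node c h]) ++ squash a ts

lemma phiF_some_eq_squash (a : σ) (f : List (RTree σ)) :
    phiF A (some a) f = squash A a (phiF A none f) := by
  induction f with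
  | nil => rfl
  | cons t ts ih =>
    obtain ⟨c, g⟩ := t
    show phiT A (some a) (.node c g) ++ phiF A (some a) ts = _
    rw [show phiF A none (RTree.node c g :: ts)
        = RTree.node c (phiF A (some c) g) :: phiF A none ts from by
      simp [phiF, phiT_none]]
    show _ = (if c = a ∧ a ∈ A then phiF A (some c) g else [.node c (phiF A (some c) g)])
        ++ squash A a (phiF A none ts)
    by_cases h : c = a ∧ a ∈ A
    · obtain ⟨rfl, hA⟩ := h
      rw [if_pos ⟨rfl, hA⟩, ih]
      simp [phiT, hA]
    · rw [if_neg h, ← ih]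
      have h'' : ¬ (a = c ∧ c ∈ A) := by
        rintro ⟨rfl, hcA⟩
        exact h ⟨rfl, hcA⟩
      simp [phiT, h'']

lemma nfCF_squash_perm (a : σ) (l : List (RTree σ)) :
    (nfCF C (squash A a l)).Perm (squash A a (nfCF C l)) := by
  induction l with
  | nil => exact List.Perm.refl _
  | cons t ts ih =>
    obtain ⟨c, h⟩ := t
    show (nfCF C ((if c = a ∧ a ∈ A then h else [.node c h]) ++ squash A a ts)).Perm
      (squash A a (nfCT C (.node c h) :: nfCF C ts))
    rw [nfCF_append]
    show _root_.List.Perm _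
      (squash A a (.node c (if c ∈ C then sortTrees (nfCF C h) else nfCF C h) :: nfCF C ts))
    show _root_.List.Perm _
      ((if c = a ∧ a ∈ A then (if c ∈ C then sortTrees (nfCF C h) else nfCF C h)
        else [.node c (if c ∈ C then sortTrees (nfCF C h) else nfCF C h)]) ++
        squash A a (nfCF C ts))
    by_cases hca : c = a ∧ a ∈ A
    · rw [if_pos hca, if_pos hca]
      refine List.Perm.append ?_ ih
      by_cases hc : c ∈ C
      · rw [if_pos hc]; exact (sortTrees_perm _).symm
      · rw [if_neg hc]
    · rw [if_neg hca, if_neg hca]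
      exact List.Perm.append (by simp [nfCF, nfCT]) ih

lemma nfCF_squash_eq (a : σ) (haC : a ∉ C) (l : List (RTree σ)) :
    nfCF C (squash A a l) = squash A a (nfCF C l) := by
  induction l with
  | nil => rfl
  | cons t ts ih =>
    obtain ⟨c, h⟩ := t
    show nfCF C ((if c = a ∧ a ∈ A then h else [.node c h]) ++ squash A a ts)
      = squash A a (nfCT C (.node c h) :: nfCF C ts)
    rw [nfCF_append]
    show _ = (if c = a ∧ a ∈ A then (if c ∈ C then sortTrees (nfCF C h) else nfCF C h)
        else [.node c (if c ∈ C then sortTrees (nfCF C h) else nfCF C h)]) ++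
        squash A a (nfCF C ts)
    by_cases hca : c = a ∧ a ∈ A
    · rw [if_pos hca, if_pos hca, if_neg (hca.1 ▸ haC), ih]
    · rw [if_neg hca, if_neg hca, ih]
      simp [nfCF, nfCT]

lemma szF_cons (c : σ) (g : List (RTree σ)) (ts : List (RTree σ)) :
    szF (.node c g :: ts) = 1 + szF g + szF ts := by
  simp [szF, szT]

lemma phi_eqAC : ∀ (n : ℕ) (b : σ) (p f : List (RTree σ)), szF f ≤ n →
    EqAC A C [.node b (p ++ phiF A (some b) f)] [.node b (p ++ f)]
  | n, b, p, [] => fun _ => by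
      show EqAC A C [.node b (p ++ [])] [.node b (p ++ [])]
      exact EqAC.refl _
  | 0, b, p, .node c g :: ts => fun hn => by
      rw [szF_cons] at hn; omega
  | n+1, b, p, .node c g :: ts => fun hn => by
      rw [szF_cons] at hn
      by_cases h : b = c ∧ c ∈ A
      · obtain ⟨rfl, hA⟩ := h
        have e1 : phiF A (some b) (RTree.node b g :: ts) = phiF A (some b) (g ++ ts) := by
          rw [phiF_append]
          show phiT A (some b) (.node b g) ++ _ = _
          simp [phiT, hA]
        rw [e1]
        have h1 := phi_eqAC n b p (g ++ ts) (by rw [szF_append]; omega)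
        refine h1.trans ?_
        have h2 : EqAC A C [RTree.node b ((p ++ g) ++ ts)]
            [RTree.node b (p ++ RTree.node b g :: ts)] := EqAC.assoc hA
        rw [List.append_assoc] at h2
        exact h2
      · have e1 : phiF A (some b) (RTree.node c g :: ts)
            = [RTree.node c (phiF A (some c) g)] ++ phiF A (some b) ts := by
          show phiT A (some b) (.node c g) ++ _ = _
          have h'' : ¬ (some b = some c ∧ c ∈ A) := by
            rintro ⟨hbc, hcA⟩
            exact h ⟨Option.some_injective σ hbc, hcA⟩
          simp [phiT, h'', h]
        rw [e1]
        have h1 := phi_eqAC n b (p ++ [RTree.node c (phiF A (some c) g)]) ts (by omega)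
        rw [List.append_assoc] at h1
        refine h1.trans ?_
        have h2 : EqAC A C [RTree.node c (phiF A (some c) g)] [RTree.node c g] := by
          have := phi_eqAC n c [] g (by omega)
          simpa using this
        have h3 : EqAC A C (p ++ ([RTree.node c (phiF A (some c) g)] ++ ts))
            (p ++ ([RTree.node c g] ++ ts)) :=
          EqAC.congrConcat (EqAC.refl p) (EqAC.congrConcat h2 (EqAC.refl ts))
        have h4 := EqAC.congrNode (a := b) h3
        simpa using h4

lemma eqAC_phiF_none (f : List (RTree σ)) : EqAC A C (phiF A none f) f := by
  induction f with
  | nil => exact EqAC.refl _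
  | cons t ts ih =>
    obtain ⟨c, g⟩ := t
    show EqAC A C (phiT A none (.node c g) ++ phiF A none ts) _
    rw [phiT_none]
    have h2 : EqAC A C [RTree.node c (phiF A (some c) g)] [RTree.node c g] := by
      have := phi_eqAC A C (szF g) c [] g le_rfl
      simpa using this
    have := EqAC.congrConcat h2 ih
    simpa using this

lemma eqAC_nfCF : ∀ (n : ℕ) (f : List (RTree σ)), szF f ≤ n → EqAC A C (nfCF C f) f
  | _, [] => fun _ => EqAC.refl _
  | 0, .node c g :: ts => fun hn => by rw [szF_cons] at hn; omega
  | n+1, .node c g :: ts => fun hn => by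
      rw [szF_cons] at hn
      show EqAC A C ([nfCT C (.node c g)] ++ nfCF C ts) ([RTree.node c g] ++ ts)
      refine EqAC.congrConcat ?_ (eqAC_nfCF n ts (by omega))
      show EqAC A C [.node c (if c ∈ C then sortTrees (nfCF C g) else nfCF C g)] _
      have hg : EqAC A C [RTree.node c (nfCF C g)] [RTree.node c g] :=
        EqAC.congrNode (eqAC_nfCF n g (by omega))
      by_cases hc : c ∈ C
      · rw [if_pos hc]
        exact (EqAC.comm hc (sortTrees_perm _)).trans hg
      · rw [if_neg hc]
        exact hg

lemma nf_eq_of_eqAC {f₁ f₂ : List (RTree σ)} (h : EqAC A C f₁ f₂) :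
    nfCF C (phiF A none f₁) = nfCF C (phiF A none f₂) := by
  induction h with
  | @assoc a f g h ha =>
      have e : phiF A none [RTree.node a (f ++ g ++ h)]
          = phiF A none [RTree.node a (f ++ RTree.node a g :: h)] := by
        show phiT A none _ ++ _ = phiT A none _ ++ _
        rw [phiT_none, phiT_none]
        have : phiF A (some a) (f ++ RTree.node a g :: h)
            = phiF A (some a) f ++ (phiF A (some a) g ++ phiF A (some a) h) := by
          have : (RTree.node a g :: h) = [RTree.node a g] ++ h := rfl
          rw [this, phiF_append, phiF_append]
          congr 1
          show phiT A (some a) (.node a g) ++ phiF A (some a) [] ++ _ = _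
          simp [phiT, phiF, ha]
        rw [this, phiF_append, phiF_append, List.append_assoc]
      rw [e]
  | @comm c l l' hc hperm =>
      show nfCF C (phiT A none _ ++ _) = nfCF C (phiT A none _ ++ _)
      rw [phiT_none, phiT_none]
      show nfCF C ([RTree.node c (phiF A (some c) l)] ++ []) = _
      simp only [List.append_nil]
      show [nfCT C (.node c _)] ++ nfCF C [] = [nfCT C (.node c _)] ++ nfCF C []
      congr 2
      show RTree.node c (if c ∈ C then _ else _) = RTree.node c (if c ∈ C then _ else _)
      rw [if_pos hc, if_pos hc]
      have hp : (nfCF C (phiF A (some c) l)).Perm (nfCF C (phiF A (some c) l')) := by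
        rw [nfCF_eq_map, nfCF_eq_map]
        exact (phiF_perm A (some c) hperm).map _
      rw [sortTrees_congr hp]
  | refl f => rfl
  | symm _ ih => exact ih.symm
  | trans _ _ ih1 ih2 => exact ih1.trans ih2
  | @congrNode a f g _ ih =>
      show nfCF C (phiT A none _ ++ _) = nfCF C (phiT A none _ ++ _)
      rw [phiT_none, phiT_none]
      simp only [phiF, List.append_nil]
      show [nfCT C (.node a _)] = [nfCT C (.node a _)]
      congr 1
      show RTree.node a (if a ∈ C then sortTrees (nfCF C (phiF A (some a) f)) else _)
        = RTree.node a (if a ∈ C then sortTrees (nfCF C (phiF A (some a) g)) else _)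
      rw [phiF_some_eq_squash, phiF_some_eq_squash]
      by_cases hc : a ∈ C
      · rw [if_pos hc, if_pos hc]
        have hp : (nfCF C (squash A a (phiF A none f))).Perm
            (nfCF C (squash A a (phiF A none g))) := by
          refine (nfCF_squash_perm A C a _).trans ?_
          rw [ih]
          exact (nfCF_squash_perm A C a _).symm
        rw [sortTrees_congr hp]
      · rw [if_neg hc, if_neg hc, nfCF_squash_eq A C a hc, nfCF_squash_eq A C a hc, ih]
  | @congrConcat f f' g g' _ _ ih1 ih2 =>
      rw [phiF_append, phiF_append, nfCF_append, nfCF_append, ih1, ih2]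

end Main

/-- `nf_𝓒(nf_𝓐(f₁)) = nf_𝓒(nf_𝓐(f₂))` iff `f₁` and `f₂` are equal modulo the
associativity identities for `𝓐` and the commutativity identities for `𝓒`. -/
theorem nfC_nfA_eq_iff_eqAC {σ : Type} [LinearOrder σ] (A C : Set σ)
    [DecidablePred (· ∈ A)] [DecidablePred (· ∈ C)] (f₁ f₂ : List (RTree σ)) :
    nfCF C (phiF A none f₁) = nfCF C (phiF A none f₂) ↔ EqAC A C f₁ f₂ := by
  constructor
  · intro h
    have e1 : EqAC A C (nfCF C (phiF A none f₁)) f₁ :=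
      (eqAC_nfCF A C (szF (phiF A none f₁)) _ le_rfl).trans (eqAC_phiF_none A C f₁)
    have e2 : EqAC A C (nfCF C (phiF A none f₂)) f₂ :=
      (eqAC_nfCF A C (szF (phiF A none f₂)) _ le_rfl).trans (eqAC_phiF_none A C f₂)
    exact (EqAC.symm e1).trans (h ▸ e2)
  · exact nf_eq_of_eqAC A C
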